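/- For K = 2 hypotheses, under the extreme-alternative assumption and with strictly decreasing continuous power coefficients a_1, a_2, the policy D̃_k(p_1, p_2) = 1{p_k ≤ α} · φ̃(p_1, p_2), where φ̃(p_1,p_2) = 1{ a_1(p_1,p_2) 1{p_1 ≤ α} + a_2(p_1,p_2) 1{p_2 ≤ α} > t_2 } and t_2 is the smallest threshold with ∫_{[0,1]^2} φ̃ ≤ α, maximizes the power Π(D) = ∫ [a_1 D_1 + a_2 D_2] over all monotone policies D with strong FWER control at level α. -/

import Mathlib

open MeasureTheory

-- Neyman-Pearson / bathtub lemma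
lemma np_aux {X : Type*} [MeasurableSpace X] (μ : Measure X) [IsFiniteMeasure μ]
    (f ψ φ : X → ℝ) (t a : ℝ) (ht : 0 ≤ t)
    (hfψ : Integrable (fun x => f x * ψ x) μ) (hfφ : Integrable (fun x => f x * φ x) μ)
    (hψint : Integrable ψ μ) (hφint : Integrable φ μ)
    (hψ0 : ∀ x, 0 ≤ ψ x) (hψ1 : ∀ x, ψ x ≤ 1)
    (hφ : ∀ x, φ x = if t < f x then 1 else 0)
    (hψa : ∫ x, ψ x ∂μ ≤ a) (hφa : a ≤ ∫ x, φ x ∂μ) :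
    ∫ x, f x * ψ x ∂μ ≤ ∫ x, f x * φ x ∂μ := by
  have key : ∀ x, f x * ψ x - f x * φ x ≤ t * ψ x - t * φ x := by
    intro x
    have h : (f x - t) * (ψ x - φ x) ≤ 0 := by
      rcases lt_or_ge t (f x) with h1 | h1
      · rw [hφ x, if_pos h1]
        exact mul_nonpos_of_nonneg_of_nonpos (by linarith) (by linarith [hψ1 x])
      · rw [hφ x, if_neg (not_lt.mpr h1)]
        exact mul_nonpos_of_nonpos_of_nonneg (by linarith) (by linarith [hψ0 x])
    nlinarith
  have h1 : ∫ x, (f x * ψ x - f x * φ x) ∂μ ≤ ∫ x, (t * ψ x - t * φ x) ∂μ :=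
    integral_mono (hfψ.sub hfφ) ((hψint.const_mul t).sub (hφint.const_mul t)) key
  rw [integral_sub hfψ hfφ, integral_sub (hψint.const_mul t) (hφint.const_mul t),
    integral_const_mul, integral_const_mul] at h1
  nlinarith [mul_le_mul_of_nonneg_left (hψa.trans hφa) ht]

-- a strictly decreasing function's level set is a subsingleton
lemma strictAnti_level_subsingleton {g : ℝ → ℝ} (hg : ∀ v w : ℝ, v < w → g w < g v) (t : ℝ) :
    {y : ℝ | g y = t}.Subsingleton := by
  intro y hy z hz
  by_contra hne
  rcases lt_or_gt_of_ne hne with h | h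
  · have := hg y z h; simp only [Set.mem_setOf_eq] at hy hz; linarith
  · have := hg z y h; simp only [Set.mem_setOf_eq] at hy hz; linarith

theorem stmt13 (α : ℝ) (hα0 : 0 < α) (hα1 : α < 1)
    (μ : Measure (ℝ × ℝ))
    (hμ : μ = (volume.restrict (Set.Icc (0:ℝ) 1)).prod (volume.restrict (Set.Icc (0:ℝ) 1)))
    (a1 a2 : ℝ × ℝ → ℝ)
    (ha1c : Continuous a1) (ha2c : Continuous a2)
    (ha1pos : ∀ x, 0 < a1 x) (ha2pos : ∀ x, 0 < a2 x)
    (ha1dec1 : ∀ u v w : ℝ, u < v → a1 (v, w) < a1 (u, w))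
    (ha1dec2 : ∀ u v w : ℝ, v < w → a1 (u, w) < a1 (u, v))
    (ha2dec1 : ∀ u v w : ℝ, u < v → a2 (v, w) < a2 (u, w))
    (ha2dec2 : ∀ u v w : ℝ, v < w → a2 (u, w) < a2 (u, v))
    (t2 : ℝ)
    (ht2 : t2 = sInf {c : ℝ |
      ∫ x, (if a1 x * (if x.1 ≤ α then (1:ℝ) else 0)
              + a2 x * (if x.2 ≤ α then (1:ℝ) else 0) > c then (1:ℝ) else 0) ∂μ ≤ α})
    (φt : ℝ × ℝ → ℝ)
    (hφt : ∀ x, φt x = if a1 x * (if x.1 ≤ α then (1:ℝ) else 0)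
              + a2 x * (if x.2 ≤ α then (1:ℝ) else 0) > t2 then (1:ℝ) else 0)
    (D1 D2 : ℝ × ℝ → ℝ)
    (hD01 : ∀ x, (D1 x = 0 ∨ D1 x = 1) ∧ (D2 x = 0 ∨ D2 x = 1))
    (hD1meas : Measurable D1) (hD2meas : Measurable D2)
    (hDmono : ∀ x y : ℝ × ℝ, x.1 ≤ y.1 → x.2 ≤ y.2 → D1 y ≤ D1 x ∧ D2 y ≤ D2 x)
    (hc1 : ∫ u in Set.Icc (0:ℝ) 1, D1 (u, 0) ≤ α)
    (hc2 : ∫ u in Set.Icc (0:ℝ) 1, D2 (0, u) ≤ α)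
    (hc3 : ∫ x, max (D1 x) (D2 x) ∂μ ≤ α) :
    ∫ x, (a1 x * D1 x + a2 x * D2 x) ∂μ ≤
      ∫ x, (a1 x * ((if x.1 ≤ α then (1:ℝ) else 0) * φt x)
          + a2 x * ((if x.2 ≤ α then (1:ℝ) else 0) * φt x)) ∂μ := by
  -- notation
  set I : Set ℝ := Set.Icc (0:ℝ) 1 with hI
  set ν : Measure ℝ := volume.restrict I with hν
  set B : Set (ℝ × ℝ) := I ×ˢ I with hB
  have hBm : MeasurableSet B := (measurableSet_Icc).prod measurableSet_Icc
  haveI : IsFiniteMeasure ν := by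
    constructor
    rw [hν, Measure.restrict_apply_univ, hI, Real.volume_Icc]
    exact ENNReal.ofReal_lt_top
  haveI hμfin : IsFiniteMeasure μ := by rw [hμ]; infer_instance
  set f : ℝ × ℝ → ℝ := fun x => a1 x * (if x.1 ≤ α then (1:ℝ) else 0)
      + a2 x * (if x.2 ≤ α then (1:ℝ) else 0) with hf
  have hfmeas : Measurable f := by
    apply Measurable.add
    · exact ha1c.measurable.mul (Measurable.ite (measurableSet_le measurable_fst measurable_const)
        measurable_const measurable_const)
    · exact ha2c.measurable.mul (Measurable.ite (measurableSet_le measurable_snd measurable_const)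
        measurable_const measurable_const)
  have hφtmeas : Measurable φt := by
    have : φt = fun x => if t2 < f x then (1:ℝ) else 0 := by
      funext x; exact hφt x
    rw [this]
    exact Measurable.ite (measurableSet_lt measurable_const hfmeas) measurable_const
      measurable_const
  have hfnonneg : ∀ x, 0 ≤ f x := by
    intro x
    have h1 : 0 ≤ a1 x * (if x.1 ≤ α then (1:ℝ) else 0) := by
      apply mul_nonneg (ha1pos x).le; split <;> norm_num
    have h2 : 0 ≤ a2 x * (if x.2 ≤ α then (1:ℝ) else 0) := by
      apply mul_nonneg (ha2pos x).le; split <;> norm_num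
    simp only [hf]; linarith
  -- a.e. membership in B
  have haeB : ∀ᵐ x ∂μ, x ∈ B := by
    have : μ = volume.restrict B := by
      rw [hμ, Measure.prod_restrict, hB, ← Measure.volume_eq_prod]
    rw [this]
    exact ae_restrict_mem hBm
  -- bounds on a1, a2 on B
  have hBcompact : IsCompact B := (isCompact_Icc).prod isCompact_Icc
  have hBne : B.Nonempty := ⟨(0, 0), by constructor <;> exact ⟨le_refl _, by norm_num⟩⟩
  obtain ⟨C1, hC1⟩ := hBcompact.exists_bound_of_continuousOn ha1c.continuousOn
  obtain ⟨C2, hC2⟩ := hBcompact.exists_bound_of_continuousOn ha2c.continuousOn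
  obtain ⟨x1, hx1B, hx1min⟩ := hBcompact.exists_isMinOn hBne ha1c.continuousOn
  obtain ⟨x2, hx2B, hx2min⟩ := hBcompact.exists_isMinOn hBne ha2c.continuousOn
  set m : ℝ := min (a1 x1) (a2 x2) with hm
  have hmpos : 0 < m := lt_min (ha1pos x1) (ha2pos x2)
  have hma1 : ∀ x ∈ B, m ≤ a1 x := fun x hx => le_trans (min_le_left _ _) (hx1min hx)
  have hma2 : ∀ x ∈ B, m ≤ a2 x := fun x hx => le_trans (min_le_right _ _) (hx2min hx)
  have hfbound : ∀ x ∈ B, f x ≤ C1 + C2 := by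
    intro x hx
    have h1 : a1 x * (if x.1 ≤ α then (1:ℝ) else 0) ≤ C1 := by
      have := hC1 x hx; rw [Real.norm_eq_abs] at this
      have h1' := abs_le.mp this
      split
      · linarith [h1'.2]
      · simp; linarith [(ha1pos x).le, h1'.2]
    have h2 : a2 x * (if x.2 ≤ α then (1:ℝ) else 0) ≤ C2 := by
      have := hC2 x hx; rw [Real.norm_eq_abs] at this
      have h2' := abs_le.mp this
      split
      · linarith [h2'.2]
      · simp; linarith [(ha2pos x).le, h2'.2]
    simp only [hf]; linarith
  -- integrability helper
  have hbdint : ∀ (g : ℝ × ℝ → ℝ) (Cg : ℝ), Measurable g → (∀ᵐ x ∂μ, |g x| ≤ Cg) →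
      Integrable g μ := by
    intro g Cg hg hb
    exact Integrable.mono' (integrable_const Cg) hg.aestronglyMeasurable
      (by simpa [Real.norm_eq_abs] using hb)
  -- indicator integral identity
  have hind : ∀ (c : ℝ), ∫ x, (if c < f x then (1:ℝ) else 0) ∂μ = (μ {x | c < f x}).toReal := by
    intro c
    have hmeas : MeasurableSet {x : ℝ × ℝ | c < f x} := measurableSet_lt measurable_const hfmeas
    have : (fun x => if c < f x then (1:ℝ) else 0)
        = fun x => Set.indicator {x | c < f x} (fun _ => (1:ℝ)) x := by
      funext x; simp [Set.indicator_apply, Set.mem_setOf_eq]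
    rw [this, integral_indicator_const (1:ℝ) hmeas, smul_eq_mul, mul_one, measureReal_def]
  -- the threshold set
  set S : Set ℝ := {c : ℝ | ∫ x, (if c < f x then (1:ℝ) else 0) ∂μ ≤ α} with hS
  have ht2' : t2 = sInf S := by rw [ht2]
  -- μ of the union region
  set U : Set (ℝ × ℝ) := {x | x.1 ≤ α ∨ x.2 ≤ α} with hU
  have hUm : MeasurableSet U := (measurableSet_le measurable_fst measurable_const).union
    (measurableSet_le measurable_snd measurable_const)
  have hUc : Uᶜ = Set.Ioi α ×ˢ Set.Ioi α := by
    ext x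
    simp [hU, Set.mem_prod, Set.mem_Ioi, not_or, not_le]
  have hνIoi : ν (Set.Ioi α) = ENNReal.ofReal (1 - α) := by
    rw [hν, Measure.restrict_apply measurableSet_Ioi]
    have : Set.Ioi α ∩ I = Set.Ioc α 1 := by
      ext x
      simp only [hI, Set.mem_inter_iff, Set.mem_Ioi, Set.mem_Icc, Set.mem_Ioc]
      constructor
      · rintro ⟨h1, h2, h3⟩; exact ⟨h1, h3⟩
      · rintro ⟨h1, h2⟩; exact ⟨h1, by linarith, h2⟩
    rw [this, Real.volume_Ioc]
  have hνuniv : ν Set.univ = ENNReal.ofReal 1 := by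
    rw [hν, Measure.restrict_apply_univ, hI, Real.volume_Icc]
    norm_num
  have hμuniv : μ Set.univ = ENNReal.ofReal 1 := by
    rw [hμ, ← Set.univ_prod_univ, Measure.prod_prod, hνuniv]
    rw [← ENNReal.ofReal_mul (by norm_num)]; norm_num
  have hμUc : μ Uᶜ = ENNReal.ofReal ((1 - α) * (1 - α)) := by
    rw [hUc, hμ, Measure.prod_prod, hνIoi, ← ENNReal.ofReal_mul (by linarith)]
  have hμU : (μ U).toReal = 1 - (1 - α) * (1 - α) := by
    have h2 : μ U = μ Set.univ - μ Uᶜ := by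
      have := measure_compl (μ := μ) hUm.compl (measure_ne_top μ _)
      rw [compl_compl] at this
      rw [this]
    rw [h2, hμuniv, hμUc, ← ENNReal.ofReal_sub _ (by nlinarith), ENNReal.toReal_ofReal (by nlinarith)]
  -- lower bound on f on U ∩ B
  have hfgem : ∀ x ∈ B, x ∈ U → m ≤ f x := by
    intro x hxB hxU
    have h1 : 0 ≤ a1 x * (if x.1 ≤ α then (1:ℝ) else 0) := by
      apply mul_nonneg (ha1pos x).le; split <;> norm_num
    have h2 : 0 ≤ a2 x * (if x.2 ≤ α then (1:ℝ) else 0) := by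
      apply mul_nonneg (ha2pos x).le; split <;> norm_num
    rcases hxU with h | h
    · have := hma1 x hxB
      simp only [hf, if_pos h, mul_one]
      linarith
    · have := hma2 x hxB
      simp only [hf, if_pos h, mul_one]
      linarith
  -- G c > α for c < m
  have hGlb : ∀ c : ℝ, c < m → α < ∫ x, (if c < f x then (1:ℝ) else 0) ∂μ := by
    intro c hc
    have hintInd : Integrable (fun x => Set.indicator U (fun _ => (1:ℝ)) x) μ :=
      (integrable_const (1:ℝ)).indicator hUm
    have hintIf : Integrable (fun x => if c < f x then (1:ℝ) else 0) μ := by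
      apply hbdint _ 1 (Measurable.ite (measurableSet_lt measurable_const hfmeas)
        measurable_const measurable_const)
      filter_upwards with x
      split <;> norm_num
    have hpt : ∀ᵐ x ∂μ, Set.indicator U (fun _ => (1:ℝ)) x ≤ (if c < f x then (1:ℝ) else 0) := by
      filter_upwards [haeB] with x hxB
      rw [Set.indicator_apply]
      split_ifs with h1 h2 h3
      · exact le_refl 1
      · exact absurd (lt_of_lt_of_le hc (hfgem x hxB h1)) h2
      · norm_num
      · norm_num
    have hmono := integral_mono_ae hintInd hintIf hpt
    rw [integral_indicator_const (1:ℝ) hUm, smul_eq_mul, mul_one, measureReal_def, hμU] at hmono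
    nlinarith
  -- S is bounded below by m and nonempty
  have hSlb : ∀ c ∈ S, m ≤ c := by
    intro c hc
    by_contra h
    push_neg at h
    have := hGlb c h
    simp only [hS, Set.mem_setOf_eq] at hc
    linarith
  have hSne : S.Nonempty := by
    refine ⟨C1 + C2, ?_⟩
    simp only [hS, Set.mem_setOf_eq]
    have heq : (fun x => if C1 + C2 < f x then (1:ℝ) else 0) =ᵐ[μ] (fun _ => (0:ℝ)) := by
      filter_upwards [haeB] with x hx
      rw [if_neg (not_lt.mpr (hfbound x hx))]
    rw [integral_congr_ae heq, integral_zero]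
    linarith
  have ht2m : m ≤ t2 := by
    rw [ht2']
    exact le_csInf hSne hSlb
  have ht2pos : 0 < t2 := lt_of_lt_of_le hmpos ht2m
  -- measure of {f ≥ t2} is at least α
  have hsm : ∀ c : ℝ, MeasurableSet {x : ℝ × ℝ | c < f x} :=
    fun c => measurableSet_lt measurable_const hfmeas
  have hge : ENNReal.ofReal α ≤ μ {x | t2 ≤ f x} := by
    set c : ℕ → ℝ := fun n : ℕ => t2 - 1 / ((n : ℝ) + 1) with hcdef
    have hc : ∀ n : ℕ, (0:ℝ) < 1 / ((n : ℝ) + 1) := fun n => by positivity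
    have hclt : ∀ n, c n < t2 := fun n => sub_lt_self t2 (hc n)
    have hcmono : Monotone c := by
      intro n k hnk
      simp only [hcdef]
      have hle : ((n : ℝ)) ≤ (k : ℝ) := Nat.cast_le.mpr hnk
      have h1 : (1:ℝ) / ((k : ℝ) + 1) ≤ 1 / ((n : ℝ) + 1) :=
        one_div_le_one_div_of_le (by positivity) (by linarith)
      linarith
    have htend : Filter.Tendsto c Filter.atTop (nhds t2) := by
      have h0 := tendsto_one_div_add_atTop_nhds_zero_nat (𝕜 := ℝ)
      have h1 := Filter.Tendsto.const_sub t2 h0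
      rw [sub_zero] at h1
      exact h1
    set s : ℕ → Set (ℝ × ℝ) := fun n => {x | c n < f x} with hs
    have hanti : Antitone s := by
      intro n k hnk x hx
      simp only [hs, Set.mem_setOf_eq] at hx ⊢
      exact lt_of_le_of_lt (hcmono hnk) hx
    have hiInter : ⋂ n, s n = {x | t2 ≤ f x} := by
      ext x
      simp only [Set.mem_iInter, hs, Set.mem_setOf_eq]
      constructor
      · intro h
        exact le_of_tendsto htend (Filter.Eventually.of_forall fun n => (h n).le)
      · intro h n
        exact lt_of_lt_of_le (hclt n) h
    have hsn : ∀ n, ENNReal.ofReal α ≤ μ (s n) := by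
      intro n
      have hnotS : c n ∉ S := by
        intro hmem
        have := csInf_le ⟨m, hSlb⟩ hmem
        rw [← ht2'] at this
        exact absurd this (not_le.mpr (hclt n))
      simp only [hS, Set.mem_setOf_eq, not_le] at hnotS
      rw [hind (c n)] at hnotS
      calc ENNReal.ofReal α ≤ ENNReal.ofReal ((μ {x | c n < f x}).toReal) :=
            ENNReal.ofReal_le_ofReal hnotS.le
        _ = μ {x | c n < f x} := ENNReal.ofReal_toReal (measure_ne_top μ _)
        _ = μ (s n) := by rw [hs]
    have hlim := tendsto_measure_iInter_atTop (μ := μ) (s := s)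
      (fun n => (hsm (c n)).nullMeasurableSet) hanti ⟨0, measure_ne_top μ _⟩
    rw [hiInter] at hlim
    exact ge_of_tendsto' hlim hsn
  -- level set has measure zero
  have hlevel : μ {x : ℝ × ℝ | f x = t2} = 0 := by
    have hmeasS0 : MeasurableSet {x : ℝ × ℝ | f x = t2} :=
      hfmeas (measurableSet_singleton t2)
    rw [hμ, Measure.prod_apply hmeasS0]
    have hsec : ∀ u : ℝ, ν (Prod.mk u ⁻¹' {x : ℝ × ℝ | f x = t2}) = 0 := by
      intro u
      have hseceq : Prod.mk u ⁻¹' {x : ℝ × ℝ | f x = t2} = {y : ℝ | f (u, y) = t2} := rfl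
      have hfuy : ∀ y : ℝ, f (u, y)
          = a1 (u, y) * (if u ≤ α then (1:ℝ) else 0) + a2 (u, y) * (if y ≤ α then (1:ℝ) else 0) :=
        fun y => rfl
      have h1 : ({y : ℝ | f (u, y) = t2} ∩ {y | y ≤ α}).Subsingleton := by
        rintro y ⟨hy1, hy2⟩ z ⟨hz1, hz2⟩
        simp only [Set.mem_setOf_eq] at hy1 hy2 hz1 hz2
        by_contra hne
        have key : ∀ v w : ℝ, v < w → w ≤ α → f (u, w) < f (u, v) := by
          intro v w hvw hwα
          have hvα : v ≤ α := le_trans hvw.le hwα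
          rw [hfuy v, hfuy w, if_pos hvα, if_pos hwα, mul_one, mul_one]
          have ha2 := ha2dec2 u v w hvw
          by_cases hu : u ≤ α
          · rw [if_pos hu, mul_one, mul_one]
            have := ha1dec2 u v w hvw
            linarith
          · rw [if_neg hu, mul_zero, mul_zero]
            linarith
        rcases lt_or_gt_of_ne hne with hlt | hlt
        · have := key y z hlt hz2; rw [hy1, hz1] at this; exact lt_irrefl _ this
        · have := key z y hlt hy2; rw [hy1, hz1] at this; exact lt_irrefl _ this
      have h2 : ({y : ℝ | f (u, y) = t2} ∩ {y | α < y}).Subsingleton := by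
        by_cases hu : u ≤ α
        · rintro y ⟨hy1, hy2⟩ z ⟨hz1, hz2⟩
          simp only [Set.mem_setOf_eq] at hy1 hy2 hz1 hz2
          by_contra hne
          have key : ∀ v w : ℝ, v < w → α < v → f (u, w) < f (u, v) := by
            intro v w hvw hαv
            have hαw : α < w := lt_trans hαv hvw
            rw [hfuy v, hfuy w, if_neg (not_le.mpr hαv), if_neg (not_le.mpr hαw),
              mul_zero, mul_zero, add_zero, add_zero, if_pos hu, mul_one, mul_one]
            exact ha1dec2 u v w hvw
          rcases lt_or_gt_of_ne hne with hlt | hlt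
          · have := key y z hlt hy2; rw [hy1, hz1] at this; exact lt_irrefl _ this
          · have := key z y hlt hz2; rw [hy1, hz1] at this; exact lt_irrefl _ this
        · have hempty : ({y : ℝ | f (u, y) = t2} ∩ {y | α < y}) = ∅ := by
            ext y
            simp only [Set.mem_inter_iff, Set.mem_setOf_eq, Set.mem_empty_iff_false,
              iff_false, not_and]
            intro hfy hαy
            rw [hfuy y, if_neg hu, if_neg (not_le.mpr hαy), mul_zero, mul_zero,
              add_zero] at hfy
            linarith
          rw [hempty]
          exact Set.subsingleton_empty
      have hsplit : {y : ℝ | f (u, y) = t2} ⊆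
          ({y : ℝ | f (u, y) = t2} ∩ {y | y ≤ α}) ∪ ({y : ℝ | f (u, y) = t2} ∩ {y | α < y}) := by
        intro y hy
        rcases le_or_gt y α with h | h
        · exact Or.inl ⟨hy, h⟩
        · exact Or.inr ⟨hy, h⟩
      have hvol : volume {y : ℝ | f (u, y) = t2} = 0 := by
        apply measure_mono_null hsplit
        apply measure_union_null
        · exact h1.countable.measure_zero _
        · exact h2.countable.measure_zero _
      rw [hseceq]
      have hle : ν {y : ℝ | f (u, y) = t2} ≤ 0 :=
        calc ν {y : ℝ | f (u, y) = t2} ≤ volume {y : ℝ | f (u, y) = t2} :=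
              Measure.restrict_apply_le _ _
          _ = 0 := hvol
      exact le_antisymm hle (by simp)
    simp only [hsec]
    simp
  -- the integral of φt is at least α
  have hφteq : ∀ x, φt x = if t2 < f x then (1:ℝ) else 0 := hφt
  have hφta : α ≤ ∫ x, φt x ∂μ := by
    have heq : (fun x => φt x) = fun x => if t2 < f x then (1:ℝ) else 0 := funext hφteq
    rw [heq, hind t2]
    have hsub : {x : ℝ × ℝ | t2 ≤ f x} ⊆ {x | t2 < f x} ∪ {x | f x = t2} := by
      intro x hx
      simp only [Set.mem_setOf_eq, Set.mem_union] at *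
      rcases lt_or_eq_of_le hx with h | h
      · exact Or.inl h
      · exact Or.inr h.symm
    have h1 : μ {x | t2 ≤ f x} ≤ μ {x | t2 < f x} := by
      calc μ {x | t2 ≤ f x} ≤ μ ({x | t2 < f x} ∪ {x | f x = t2}) := measure_mono hsub
        _ ≤ μ {x | t2 < f x} + μ {x | f x = t2} := measure_union_le _ _
        _ = μ {x | t2 < f x} := by rw [hlevel, add_zero]
    have h2 : ENNReal.ofReal α ≤ μ {x | t2 < f x} := le_trans hge h1
    calc α = (ENNReal.ofReal α).toReal := (ENNReal.toReal_ofReal hα0.le).symm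
      _ ≤ (μ {x | t2 < f x}).toReal := ENNReal.toReal_mono (measure_ne_top μ _) h2
  -- ranges of D1, D2
  have hD1range : ∀ x, 0 ≤ D1 x ∧ D1 x ≤ 1 := fun x => by
    rcases (hD01 x).1 with h | h <;> rw [h] <;> norm_num
  have hD2range : ∀ x, 0 ≤ D2 x ∧ D2 x ≤ 1 := fun x => by
    rcases (hD01 x).2 with h | h <;> rw [h] <;> norm_num
  -- D1 vanishes for first coordinate above α
  have hD10 : ∀ u : ℝ, α < u → u ≤ 1 → D1 (u, 0) = 0 := by
    intro u hαu hu1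
    rcases (hD01 (u, 0)).1 with h | h
    · exact h
    · exfalso
      have hpt : ∀ v : ℝ, Set.indicator (Set.Icc 0 u) (fun _ => (1:ℝ)) v ≤ D1 (v, 0) := by
        intro v
        rw [Set.indicator_apply]
        split_ifs with hv
        · have := (hDmono (v, 0) (u, 0) hv.2 le_rfl).1
          rw [h] at this
          exact this
        · exact (hD1range (v, 0)).1
      have hint1 : Integrable (fun v => D1 (v, 0)) ν := by
        apply Integrable.mono' (integrable_const (1:ℝ))
        · exact (hD1meas.comp (measurable_id.prodMk measurable_const)).aestronglyMeasurable
        · filter_upwards with v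
          rw [Real.norm_eq_abs, abs_le]
          exact ⟨by linarith [(hD1range (v, 0)).1], (hD1range (v, 0)).2⟩
      have hint2 : Integrable (fun v => Set.indicator (Set.Icc 0 u) (fun _ => (1:ℝ)) v) ν :=
        (integrable_const (1:ℝ)).indicator measurableSet_Icc
      have hmono := integral_mono hint2 hint1 hpt
      rw [integral_indicator_const (1:ℝ) measurableSet_Icc, smul_eq_mul, mul_one] at hmono
      have hνIcc : ν (Set.Icc 0 u) = ENNReal.ofReal u := by
        rw [hν, Measure.restrict_apply measurableSet_Icc]
        have : Set.Icc (0:ℝ) u ∩ I = Set.Icc 0 u :=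
          Set.inter_eq_left.mpr (Set.Icc_subset_Icc le_rfl hu1)
        rw [this, Real.volume_Icc, sub_zero]
      rw [measureReal_def, hνIcc, ENNReal.toReal_ofReal (by linarith)] at hmono
      linarith [hc1]
  have hD20 : ∀ u : ℝ, α < u → u ≤ 1 → D2 (0, u) = 0 := by
    intro u hαu hu1
    rcases (hD01 (0, u)).2 with h | h
    · exact h
    · exfalso
      have hpt : ∀ v : ℝ, Set.indicator (Set.Icc 0 u) (fun _ => (1:ℝ)) v ≤ D2 (0, v) := by
        intro v
        rw [Set.indicator_apply]
        split_ifs with hv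
        · have := (hDmono (0, v) (0, u) le_rfl hv.2).2
          rw [h] at this
          exact this
        · exact (hD2range (0, v)).1
      have hint1 : Integrable (fun v => D2 (0, v)) ν := by
        apply Integrable.mono' (integrable_const (1:ℝ))
        · exact (hD2meas.comp (measurable_const.prodMk measurable_id)).aestronglyMeasurable
        · filter_upwards with v
          rw [Real.norm_eq_abs, abs_le]
          exact ⟨by linarith [(hD2range (0, v)).1], (hD2range (0, v)).2⟩
      have hint2 : Integrable (fun v => Set.indicator (Set.Icc 0 u) (fun _ => (1:ℝ)) v) ν :=
        (integrable_const (1:ℝ)).indicator measurableSet_Icc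
      have hmono := integral_mono hint2 hint1 hpt
      rw [integral_indicator_const (1:ℝ) measurableSet_Icc, smul_eq_mul, mul_one] at hmono
      have hνIcc : ν (Set.Icc 0 u) = ENNReal.ofReal u := by
        rw [hν, Measure.restrict_apply measurableSet_Icc]
        have : Set.Icc (0:ℝ) u ∩ I = Set.Icc 0 u :=
          Set.inter_eq_left.mpr (Set.Icc_subset_Icc le_rfl hu1)
        rw [this, Real.volume_Icc, sub_zero]
      rw [measureReal_def, hνIcc, ENNReal.toReal_ofReal (by linarith)] at hmono
      linarith [hc2]
  have hD1z : ∀ x : ℝ × ℝ, x ∈ B → α < x.1 → D1 x = 0 := by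
    intro x hxB hx1
    have h0 : D1 x ≤ D1 (x.1, 0) := (hDmono (x.1, 0) x le_rfl hxB.2.1).1
    rw [hD10 x.1 hx1 hxB.1.2] at h0
    exact le_antisymm h0 (hD1range x).1
  have hD2z : ∀ x : ℝ × ℝ, x ∈ B → α < x.2 → D2 x = 0 := by
    intro x hxB hx2
    have h0 : D2 x ≤ D2 (0, x.2) := (hDmono (0, x.2) x hxB.1.1 le_rfl).2
    rw [hD20 x.2 hx2 hxB.2.2] at h0
    exact le_antisymm h0 (hD2range x).1
  -- ψ = max of decisions
  set ψ : ℝ × ℝ → ℝ := fun x => max (D1 x) (D2 x) with hψdef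
  have hψmeas : Measurable ψ := hD1meas.max hD2meas
  have hψ0 : ∀ x, 0 ≤ ψ x := fun x => le_trans (hD1range x).1 (le_max_left _ _)
  have hψ1 : ∀ x, ψ x ≤ 1 := fun x => max_le (hD1range x).2 (hD2range x).2
  have hφ0 : ∀ x, 0 ≤ φt x := fun x => by rw [hφteq x]; split <;> norm_num
  have hφ1 : ∀ x, φt x ≤ 1 := fun x => by rw [hφteq x]; split <;> norm_num
  -- bounds
  have hB00 : ((0:ℝ), (0:ℝ)) ∈ B := ⟨⟨le_rfl, by norm_num⟩, ⟨le_rfl, by norm_num⟩⟩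
  have hC0 : (0:ℝ) ≤ C1 + C2 := le_trans (hfnonneg (0, 0)) (hfbound _ hB00)
  have habs1 : ∀ x ∈ B, a1 x ≤ C1 := fun x hx =>
    (abs_le.mp (by simpa [Real.norm_eq_abs] using hC1 x hx)).2
  have habs2 : ∀ x ∈ B, a2 x ≤ C2 := fun x hx =>
    (abs_le.mp (by simpa [Real.norm_eq_abs] using hC2 x hx)).2
  -- integrabilities
  have hintfψ : Integrable (fun x => f x * ψ x) μ := by
    apply hbdint (fun x => f x * ψ x) (C1 + C2) (hfmeas.mul hψmeas)
    filter_upwards [haeB] with x hx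
    rw [abs_le]
    have e1 : f x * ψ x ≤ f x := mul_le_of_le_one_right (hfnonneg x) (hψ1 x)
    have e2 : 0 ≤ f x * ψ x := mul_nonneg (hfnonneg x) (hψ0 x)
    exact ⟨by linarith, by linarith [hfbound x hx]⟩
  have hintfφ : Integrable (fun x => f x * φt x) μ := by
    apply hbdint (fun x => f x * φt x) (C1 + C2) (hfmeas.mul hφtmeas)
    filter_upwards [haeB] with x hx
    rw [abs_le]
    have e1 : f x * φt x ≤ f x := mul_le_of_le_one_right (hfnonneg x) (hφ1 x)
    have e2 : 0 ≤ f x * φt x := mul_nonneg (hfnonneg x) (hφ0 x)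
    exact ⟨by linarith, by linarith [hfbound x hx]⟩
  have hintψ : Integrable ψ μ := by
    apply hbdint _ 1 hψmeas
    filter_upwards with x
    rw [abs_le]
    exact ⟨by linarith [hψ0 x], hψ1 x⟩
  have hintφ : Integrable φt μ := by
    apply hbdint _ 1 hφtmeas
    filter_upwards with x
    rw [abs_le]
    exact ⟨by linarith [hφ0 x], hφ1 x⟩
  have hintLHS : Integrable (fun x => a1 x * D1 x + a2 x * D2 x) μ := by
    apply hbdint (fun x => a1 x * D1 x + a2 x * D2 x) (C1 + C2) ((ha1c.measurable.mul hD1meas).add (ha2c.measurable.mul hD2meas))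
    filter_upwards [haeB] with x hx
    rw [abs_le]
    have e1 : a1 x * D1 x ≤ a1 x := mul_le_of_le_one_right (ha1pos x).le (hD1range x).2
    have e2 : a2 x * D2 x ≤ a2 x := mul_le_of_le_one_right (ha2pos x).le (hD2range x).2
    have e3 : 0 ≤ a1 x * D1 x := mul_nonneg (ha1pos x).le (hD1range x).1
    have e4 : 0 ≤ a2 x * D2 x := mul_nonneg (ha2pos x).le (hD2range x).1
    exact ⟨by linarith, by linarith [habs1 x hx, habs2 x hx]⟩
  -- step 1 : pointwise domination
  have step1 : ∫ x, (a1 x * D1 x + a2 x * D2 x) ∂μ ≤ ∫ x, f x * ψ x ∂μ := by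
    apply integral_mono_ae hintLHS hintfψ
    filter_upwards [haeB] with x hx
    have hD1ψ : D1 x ≤ ψ x := le_max_left _ _
    have hD2ψ : D2 x ≤ ψ x := le_max_right _ _
    have h1 := (hD1range x).1
    have h2 := (hD2range x).1
    have ha1 := ha1pos x
    have ha2 := ha2pos x
    rcases le_or_gt x.1 α with hx1 | hx1 <;> rcases le_or_gt x.2 α with hx2 | hx2
    · simp only [hf, if_pos hx1, if_pos hx2, mul_one]
      nlinarith
    · have hz : D2 x = 0 := hD2z x hx hx2
      simp only [hf, if_pos hx1, if_neg (not_le.mpr hx2), mul_one, mul_zero, add_zero]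
      rw [hz, mul_zero, add_zero]
      nlinarith
    · have hz : D1 x = 0 := hD1z x hx hx1
      simp only [hf, if_neg (not_le.mpr hx1), if_pos hx2, mul_one, mul_zero, zero_add]
      rw [hz, mul_zero, zero_add]
      nlinarith
    · have hz1 : D1 x = 0 := hD1z x hx hx1
      have hz2 : D2 x = 0 := hD2z x hx hx2
      rw [hz1, hz2, mul_zero, mul_zero, add_zero]
      exact mul_nonneg (hfnonneg x) (hψ0 x)
  -- step 2 : Neyman-Pearson
  have step2 : ∫ x, f x * ψ x ∂μ ≤ ∫ x, f x * φt x ∂μ :=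
    np_aux μ f ψ φt t2 α ht2pos.le hintfψ hintfφ hintψ hintφ hψ0 hψ1 hφteq hc3 hφta
  -- step 3 : identify the right-hand side
  have step3 : ∫ x, f x * φt x ∂μ = ∫ x, (a1 x * ((if x.1 ≤ α then (1:ℝ) else 0) * φt x)
      + a2 x * ((if x.2 ≤ α then (1:ℝ) else 0) * φt x)) ∂μ := by
    apply integral_congr_ae
    filter_upwards with x
    simp only [hf]
    ring
  exact le_trans step1 (le_trans step2 (le_of_eq step3))
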